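/- Let f(x) = α_k x^k + ... + α_1 x be an odd integer polynomial of degree k ≥ 3. There exists a constant C > 0 depending only on f such that for all integers n, d ≥ 1 with α_k d^k ≤ n, the normalizing constant K = 2 ∑_{j ≥ 1, α_k (dj)^k ≤ n} α_k k d^k j^{k−1} (1/n − α_k (dj)^k / n²) satisfies |K − 1| ≤ C d n^{−1/k}. -/

import Mathlib

open Finset



/-- Bernoulli upper: `j^k + k j^(k-1) ≤ (j+1)^k` for real `j := (j:ℝ)`, `j ≥ 1`, `k ≥ 1`. -/
lemma pow_succ_lower (k j : ℕ) (hk : 1 ≤ k) (hj : 1 ≤ j) :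
    (j:ℝ)^k + (k:ℝ) * (j:ℝ)^(k-1) ≤ ((j:ℝ)+1)^k := by
  have hj1 : (1:ℝ) ≤ (j:ℝ) := by exact_mod_cast hj
  have hj0 : (j:ℝ) ≠ 0 := by positivity
  have hb : (1:ℝ) + (k:ℝ) * (1/(j:ℝ)) ≤ (1 + 1/(j:ℝ))^k := by
    have := one_add_mul_le_pow (a := 1/(j:ℝ)) (by nlinarith [one_div_pos.mpr (show (0:ℝ) < j by linarith)]) k
    linarith
  have hpk : (j:ℝ)^k = (j:ℝ)^(k-1) * (j:ℝ) := by
    rw [← pow_succ]; congr 1; omega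
  have h2 : ((j:ℝ)+1)^k = (j:ℝ)^k * (1 + 1/(j:ℝ))^k := by
    rw [← mul_pow]; congr 1; field_simp
  rw [h2]
  have hjknn : (0:ℝ) ≤ (j:ℝ)^k := by positivity
  have := mul_le_mul_of_nonneg_left hb hjknn
  calc (j:ℝ)^k + (k:ℝ) * (j:ℝ)^(k-1)
      = (j:ℝ)^k * (1 + (k:ℝ) * (1/(j:ℝ))) := by rw [hpk]; field_simp
    _ ≤ (j:ℝ)^k * (1 + 1/(j:ℝ))^k := this

/-- Bernoulli lower: `j^k − k j^(k-1) ≤ (j-1)^k`. -/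
lemma pow_pred_lower (k j : ℕ) (hk : 1 ≤ k) (hj : 1 ≤ j) :
    (j:ℝ)^k - (k:ℝ) * (j:ℝ)^(k-1) ≤ ((j:ℝ)-1)^k := by
  have hj1 : (1:ℝ) ≤ (j:ℝ) := by exact_mod_cast hj
  have hj0 : (j:ℝ) ≠ 0 := by positivity
  have hb : (1:ℝ) + (k:ℝ) * (-(1/(j:ℝ))) ≤ (1 + -(1/(j:ℝ)))^k := by
    have := one_add_mul_le_pow (a := -(1/(j:ℝ))) (by
      have : 1/(j:ℝ) ≤ 1 := by rw [div_le_one]; linarith; linarith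
      linarith) k
    linarith
  have hpk : (j:ℝ)^k = (j:ℝ)^(k-1) * (j:ℝ) := by
    rw [← pow_succ]; congr 1; omega
  have h2 : ((j:ℝ)-1)^k = (j:ℝ)^k * (1 + -(1/(j:ℝ)))^k := by
    rw [← mul_pow]; congr 1; field_simp; ring
  rw [h2]
  have hjknn : (0:ℝ) ≤ (j:ℝ)^k := by positivity
  have := mul_le_mul_of_nonneg_left hb hjknn
  calc (j:ℝ)^k - (k:ℝ) * (j:ℝ)^(k-1)
      = (j:ℝ)^k * (1 + (k:ℝ) * (-(1/(j:ℝ)))) := by rw [hpk]; field_simp; ring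
    _ ≤ (j:ℝ)^k * (1 + -(1/(j:ℝ)))^k := this

/-- Telescoping bounds for `∑_{i<M} k (i+1)^(k-1)`. -/
lemma sum_pow_lower (k M : ℕ) (hk : 1 ≤ k) :
    (M:ℝ)^k ≤ ∑ i ∈ range M, (k:ℝ) * ((i:ℝ)+1)^(k-1) := by
  have htel : ∑ i ∈ range M, ((((i:ℝ)+1))^k - (i:ℝ)^k) = (M:ℝ)^k - 0^k := by
    have := Finset.sum_range_sub (f := fun i : ℕ => (i:ℝ)^k) M
    simpa using this
  have h0 : (0:ℝ)^k = 0 := zero_pow (by omega)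
  rw [h0, sub_zero] at htel
  rw [← htel]
  apply Finset.sum_le_sum
  intro i _
  have := pow_pred_lower k (i+1) hk (by omega)
  push_cast at this ⊢
  have he : ((i:ℝ)+1-1) = (i:ℝ) := by ring
  rw [he] at this
  linarith

lemma sum_pow_upper (k M : ℕ) (hk : 1 ≤ k) :
    ∑ i ∈ range M, (k:ℝ) * ((i:ℝ)+1)^(k-1) ≤ ((M:ℝ)+1)^k - 1 := by
  have htel : ∑ i ∈ range M, ((((i:ℝ)+1)+1)^k - ((i:ℝ)+1)^k) = ((M:ℝ)+1)^k - 1 := by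
    have := Finset.sum_range_sub (f := fun i : ℕ => ((i:ℝ)+1)^k) M
    simpa using this
  rw [← htel]
  apply Finset.sum_le_sum
  intro i _
  have := pow_succ_lower k (i+1) hk (by omega)
  push_cast at this ⊢
  linarith

/-- The normalizing constant
`K = 2 ∑_{j ≥ 1, α_k (dj)^k ≤ n} α_k k d^k j^{k-1} (1/n − α_k (dj)^k / n²)`.
(Since `α_k ≥ 1` and `d ≥ 1`, every index `j` with `α_k (dj)^k ≤ n` satisfies
`j ≤ n`, so the index set is exactly the filtered interval below.) -/
noncomputable def Kconst (k : ℕ) (α : ℕ → ℤ) (n d : ℕ) : ℝ :=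
  2 * ∑ j ∈ (Finset.Icc 1 n).filter (fun j => α k * ((d * j : ℕ) : ℤ) ^ k ≤ (n : ℤ)),
      (α k : ℝ) * (k : ℝ) * (d : ℝ) ^ k * (j : ℝ) ^ (k - 1) *
        (1 / (n : ℝ) - (α k : ℝ) * ((d * j : ℕ) : ℝ) ^ k / (n : ℝ) ^ 2)

set_option maxHeartbeats 1600000 in
/-- For an odd integer polynomial of degree `k ≥ 3` there exists
`C > 0` depending only on the polynomial such that for all `n, d ≥ 1` with
`α_k d^k ≤ n`, the normalizing constant satisfies `|K − 1| ≤ C d n^{-1/k}`. -/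
theorem stmt_8 (k : ℕ) (hk : 3 ≤ k) (α : ℕ → ℤ)
    (hlead : 0 < α k) (hodd : ∀ j, Even j → α j = 0) :
    ∃ C : ℝ, 0 < C ∧ ∀ n d : ℕ, 1 ≤ n → 1 ≤ d → α k * (d : ℤ) ^ k ≤ (n : ℤ) →
      |Kconst k α n d - 1| ≤ C * (d : ℝ) * (n : ℝ) ^ (-(1 / (k : ℝ))) := by
  have hA0 : (0:ℝ) < (α k : ℝ) := by exact_mod_cast hlead
  have hA1 : (1:ℝ) ≤ (α k : ℝ) := by exact_mod_cast hlead
  set B : ℝ := (k:ℝ) * 2^(k-1) with hBdef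
  have hB1 : (1:ℝ) ≤ B := by
    have h1 : (1:ℝ) ≤ (k:ℝ) := by exact_mod_cast (by omega : 1 ≤ k)
    have h2 : (1:ℝ) ≤ (2:ℝ)^(k-1) := by
      have := pow_le_pow_left₀ (by norm_num : (0:ℝ) ≤ 1) (by norm_num : (1:ℝ) ≤ 2) (k-1)
      simpa using this
    nlinarith
  have hB0 : (0:ℝ) < B := by linarith
  refine ⟨(α k : ℝ) * (2*B + 2*B^2), by positivity, ?_⟩
  intro n d hn hd hdn
  set A : ℝ := (α k : ℝ) with hAdef
  have hn0 : (0:ℝ) < (n:ℝ) := by exact_mod_cast hn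
  have hd1 : (1:ℝ) ≤ (d:ℝ) := by exact_mod_cast hd
  set β : ℝ := A * (d:ℝ)^k / (n:ℝ) with hβdef
  have hβ0 : 0 < β := by positivity
  have hβ1 : β ≤ 1 := by
    rw [hβdef, div_le_one hn0]
    have : (α k : ℝ) * (d:ℝ)^k ≤ (n:ℝ) := by exact_mod_cast hdn
    simpa using this
  set S := (Finset.Icc 1 n).filter (fun j => α k * ((d * j : ℕ) : ℤ) ^ k ≤ (n : ℤ)) with hSdef
  -- membership criterion
  have key : ∀ j : ℕ, 1 ≤ j → α k * ((d * j : ℕ) : ℤ) ^ k ≤ (n : ℤ) → j ∈ S := by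
    intro j hj hcj
    have h1 : (j:ℤ) ≤ ((d*j : ℕ) : ℤ)^k := by
      have : j ≤ (d*j)^k := by
        calc j ≤ d*j := Nat.le_mul_of_pos_left _ (by omega)
          _ ≤ (d*j)^k := Nat.le_self_pow (by omega) _
      exact_mod_cast this
    have h2 : ((d*j : ℕ) : ℤ)^k ≤ α k * ((d * j : ℕ) : ℤ) ^ k :=
      le_mul_of_one_le_left (by positivity) (by exact_mod_cast hlead)
    have hjn : j ≤ n := by exact_mod_cast le_trans (le_trans h1 h2) hcj
    exact Finset.mem_filter.mpr ⟨Finset.mem_Icc.mpr ⟨hj, hjn⟩, hcj⟩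
  have h1S : 1 ∈ S := by
    apply key 1 le_rfl
    have : ((d*1 : ℕ) : ℤ) = (d : ℤ) := by push_cast; ring
    rw [this]; exact hdn
  have hSne : S.Nonempty := ⟨1, h1S⟩
  set M := S.max' hSne with hMdef
  have hMmem : M ∈ S := S.max'_mem hSne
  have hM1 : 1 ≤ M := S.le_max' 1 h1S
  have hMc : α k * ((d * M : ℕ) : ℤ) ^ k ≤ (n : ℤ) := (Finset.mem_filter.mp hMmem).2
  have hSeq : S = Finset.Icc 1 M := by
    ext j
    constructor
    · intro hjS
      have := (Finset.mem_Icc.mp (Finset.mem_filter.mp hjS).1).1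
      exact Finset.mem_Icc.mpr ⟨this, S.le_max' j hjS⟩
    · intro hj
      obtain ⟨hj1, hjM⟩ := Finset.mem_Icc.mp hj
      apply key j hj1
      calc α k * ((d * j : ℕ) : ℤ) ^ k ≤ α k * ((d * M : ℕ) : ℤ) ^ k := by
            apply mul_le_mul_of_nonneg_left _ hlead.le
            have : (d*j)^k ≤ (d*M)^k := Nat.pow_le_pow_left (Nat.mul_le_mul_left d hjM) k
            exact_mod_cast this
        _ ≤ (n : ℤ) := hMc
  have hM1n : ¬ (α k * ((d * (M+1) : ℕ) : ℤ) ^ k ≤ (n : ℤ)) := by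
    intro hcon
    have := S.le_max' (M+1) (key (M+1) (by omega) hcon)
    omega
  have hyZ : (n : ℤ) < α k * ((d * (M+1) : ℕ) : ℤ) ^ k := by exact lt_of_not_ge hM1n
  -- real versions
  have hx : β * (M:ℝ)^k ≤ 1 := by
    rw [hβdef, div_mul_eq_mul_div, div_le_one hn0]
    have : (α k : ℝ) * ((d * M : ℕ) : ℝ) ^ k ≤ (n:ℝ) := by exact_mod_cast hMc
    push_cast at this
    calc A * (d:ℝ)^k * (M:ℝ)^k = (α k : ℝ) * ((d:ℝ) * (M:ℝ))^k := by rw [mul_pow]; ring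
      _ ≤ (n:ℝ) := this
  have hy : 1 < β * ((M:ℝ)+1)^k := by
    rw [hβdef, div_mul_eq_mul_div, lt_div_iff₀ hn0, one_mul]
    have : (n:ℝ) < (α k : ℝ) * ((d * (M+1) : ℕ) : ℝ) ^ k := by exact_mod_cast hyZ
    push_cast at this
    calc (n:ℝ) < (α k : ℝ) * ((d:ℝ) * ((M:ℝ)+1))^k := this
      _ = A * (d:ℝ)^k * ((M:ℝ)+1)^k := by rw [mul_pow]; ring
  -- rewrite Kconst
  set S1 : ℝ := ∑ i ∈ range M, (k:ℝ) * ((i:ℝ)+1)^(k-1) with hS1def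
  set T : ℝ := ∑ i ∈ range M, ((2*k:ℕ):ℝ) * ((i:ℝ)+1)^(2*k-1) with hTdef
  have hK : Kconst k α n d = 2*β*S1 - β^2*T := by
    rw [Kconst, ← hSdef, hSeq, ← Finset.Ico_add_one_right_eq_Icc, Finset.sum_Ico_eq_sum_range]
    have hMM : M + 1 - 1 = M := by omega
    rw [hMM, Finset.mul_sum, hS1def, hTdef, Finset.mul_sum, Finset.mul_sum,
      ← Finset.sum_sub_distrib]
    apply Finset.sum_congr rfl
    intro i _
    have hjj : ∀ z:ℝ, z^(2*k-1) = z^(k-1) * z^k := by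
      intro z; rw [← pow_add]; congr 1; omega
    have hn0' : (n:ℝ) ≠ 0 := ne_of_gt hn0
    rw [hβdef, hjj]
    push_cast
    rw [show ((d:ℝ) * (1+(i:ℝ)))^k = (d:ℝ)^k * (1+(i:ℝ))^k from mul_pow _ _ _]
    field_simp
    ring
  have hS1l : (M:ℝ)^k ≤ S1 := sum_pow_lower k M (by omega)
  have hS1u : S1 ≤ ((M:ℝ)+1)^k - 1 := sum_pow_upper k M (by omega)
  have hTl' : (M:ℝ)^(2*k) ≤ T := sum_pow_lower (2*k) M (by omega)
  have hTu' : T ≤ ((M:ℝ)+1)^(2*k) - 1 := sum_pow_upper (2*k) M (by omega)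
  set P : ℝ := (M:ℝ)^k with hPdef
  set Q : ℝ := ((M:ℝ)+1)^k with hQdef
  have hTl : P^2 ≤ T := by rw [hPdef, ← pow_mul, mul_comm k 2]; exact hTl'
  have hTu : T ≤ Q^2 - 1 := by rw [hQdef, ← pow_mul, mul_comm k 2]; exact hTu'
  have hP0 : 0 ≤ P := by positivity
  have hPQ : P ≤ Q := by
    apply pow_le_pow_left₀ (by positivity)
    linarith
  set x : ℝ := β * P with hxdef
  set y : ℝ := β * Q with hydef
  set ε : ℝ := y - x with hεdef
  have hε0 : 0 ≤ ε := by
    rw [hεdef, hydef, hxdef]; nlinarith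
  have hx1 : x ≤ 1 := hx
  have hy1 : 1 < y := hy
  -- upper bound
  have hKu : Kconst k α n d - 1 ≤ 2*ε := by
    rw [hK]
    have h1 : 2*β*S1 ≤ 2*β*(Q - 1) := by nlinarith
    have h2 : β^2*P^2 ≤ β^2*T := by nlinarith
    have hxx : β^2*P^2 = x^2 := by rw [hxdef]; ring
    nlinarith [sq_nonneg (1-x)]
  -- lower bound
  have hKl : 1 - Kconst k α n d ≤ 2*ε + 2*ε^2 := by
    rw [hK]
    have h1 : 2*β*P ≤ 2*β*S1 := by nlinarith
    have h2 : β^2*T ≤ β^2*(Q^2 - 1) := by nlinarith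
    have hyy : β^2*Q^2 = y^2 := by rw [hydef]; ring
    have ht : 1 - x < ε := by linarith
    nlinarith [sq_nonneg β, hβ0.le, hε0, mul_nonneg hε0 hε0]
  -- bound ε by the k-th root of β
  set r : ℝ := β ^ ((k:ℝ))⁻¹ with hrdef
  have hr0 : 0 < r := Real.rpow_pos_of_pos hβ0 _
  have hrk : r^k = β := by
    rw [hrdef, ← Real.rpow_natCast (β ^ ((k:ℝ))⁻¹) k, ← Real.rpow_mul hβ0.le]
    rw [inv_mul_cancel₀ (by exact_mod_cast (by omega : k ≠ 0) : (k:ℝ) ≠ 0)]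
    exact Real.rpow_one β
  have hr1 : r ≤ 1 := Real.rpow_le_one hβ0.le hβ1 (by positivity)
  have hrM : r * (M:ℝ) ≤ 1 := by
    have hpow : (r * (M:ℝ))^k ≤ 1 := by
      rw [mul_pow, hrk]; exact hx
    exact (pow_le_one_iff_of_nonneg (by positivity) (by omega)).mp hpow
  have hεr : ε ≤ B * r := by
    have hber : β * ((M:ℝ)+1)^(k-1) ≤ 2^(k-1) * r := by
      have heq : β * ((M:ℝ)+1)^(k-1) = r * (r * ((M:ℝ)+1))^(k-1) := by
        rw [← hrk, mul_pow]
        rw [show r^k = r * r^(k-1) by rw [← pow_succ']; congr 1; omega]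
        ring
      have hle : r * ((M:ℝ)+1) ≤ 2 := by
        have : r * ((M:ℝ)+1) = r * (M:ℝ) + r := by ring
        linarith
      have : (r * ((M:ℝ)+1))^(k-1) ≤ 2^(k-1) :=
        pow_le_pow_left₀ (by positivity) hle _
      rw [heq]
      nlinarith
    have hQP : Q - (k:ℝ) * ((M:ℝ)+1)^(k-1) ≤ P := by
      have := pow_pred_lower k (M+1) (by omega) (by omega)
      push_cast at this
      have he : ((M:ℝ)+1-1) = (M:ℝ) := by ring
      rw [he] at this
      rw [hQdef, hPdef]
      linarith
    have hεle : ε ≤ β * ((k:ℝ) * ((M:ℝ)+1)^(k-1)) := by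
      rw [hεdef, hydef, hxdef]
      nlinarith
    calc ε ≤ β * ((k:ℝ) * ((M:ℝ)+1)^(k-1)) := hεle
      _ = (k:ℝ) * (β * ((M:ℝ)+1)^(k-1)) := by ring
      _ ≤ (k:ℝ) * (2^(k-1) * r) := by
          apply mul_le_mul_of_nonneg_left hber (by positivity)
      _ = B * r := by rw [hBdef]; ring
  -- combine
  have habs : |Kconst k α n d - 1| ≤ (2*B + 2*B^2) * r := by
    have hεB : ε ≤ B := by
      have h := mul_le_mul_of_nonneg_left hr1 hB0.le
      calc ε ≤ B * r := hεr
        _ ≤ B := by linarith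
    have hε2 : ε^2 ≤ B^2 * r := by
      have h1 : ε * ε ≤ B * (B * r) := mul_le_mul hεB hεr hε0 hB0.le
      nlinarith
    have hBr0 : 0 ≤ B^2 * r := by positivity
    rw [abs_le]
    constructor
    · linarith
    · linarith
  -- bound r
  have hrle : r ≤ A * (d:ℝ) * (n:ℝ) ^ (-(1 / (k:ℝ))) := by
    have hk0 : (k:ℝ) ≠ 0 := by exact_mod_cast (by omega : k ≠ 0)
    have hnrp : (0:ℝ) < (n:ℝ) ^ (-(1 / (k:ℝ))) := Real.rpow_pos_of_pos hn0 _
    have hnrk : ((n:ℝ) ^ (-(1 / (k:ℝ))))^k = 1/(n:ℝ) := by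
      rw [← Real.rpow_natCast ((n:ℝ) ^ (-(1 / (k:ℝ)))) k, ← Real.rpow_mul hn0.le]
      rw [show -(1/(k:ℝ)) * (k:ℝ) = -1 by field_simp]
      rw [Real.rpow_neg_one]
      exact one_div _ |>.symm
    have hcmp : r^k ≤ (A * (d:ℝ) * (n:ℝ) ^ (-(1 / (k:ℝ))))^k := by
      rw [hrk, mul_pow, mul_pow, hnrk]
      have hAk : A ≤ A^k := le_self_pow₀ hA1 (by omega)
      rw [hβdef]
      rw [div_le_iff₀ hn0]
      have hd0 : (0:ℝ) ≤ (d:ℝ)^k := by positivity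
      calc A * (d:ℝ)^k ≤ A^k * (d:ℝ)^k := mul_le_mul_of_nonneg_right hAk hd0
        _ = A^k * (d:ℝ)^k * (1/(n:ℝ)) * (n:ℝ) := by field_simp
    exact le_of_pow_le_pow_left₀ (by omega) (by positivity) hcmp
  calc |Kconst k α n d - 1| ≤ (2*B + 2*B^2) * r := habs
    _ ≤ (2*B + 2*B^2) * (A * (d:ℝ) * (n:ℝ) ^ (-(1 / (k:ℝ)))) := by
        apply mul_le_mul_of_nonneg_left hrle (by positivity)
    _ = (α k : ℝ) * (2*B + 2*B^2) * (d:ℝ) * (n:ℝ) ^ (-(1 / (k:ℝ))) := by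
        rw [hAdef]; ring
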